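/- Let S be a semigroup and let p be a strongly productive ultrafilter on S. If p contains the set FP(x) for some sequence x in S satisfying the ordered uniqueness of finite products, then p is sparse. -/

import Mathlib

/-- `𝔽`: the collection of finite nonempty subsets of `ℕ`. -/
abbrev FinsetNat := {a : Finset ℕ // a.Nonempty}

/-- `listMul a l` is the product `a * l₀ * l₁ * ⋯` of a nonempty list in a magma. -/
def listMul {S : Type*} [Mul S] : S → List S → S
  | a, [] => a
  | a, b :: l => a * listMul b l

/-- `finsetMul x a` is the product `∏_{i ∈ a} x i`, taken in increasing order of indices
(junk value `x 0` if `a` is empty). -/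
def finsetMul {S : Type*} [Mul S] (x : ℕ → S) (a : Finset ℕ) : S :=
  match (a.sort (· ≤ ·)).map x with
  | [] => x 0
  | b :: l => listMul b l

/-- `FPIn x D` is the set of products `∏_{i ∈ a} x i` (in increasing order of indices), where
`a` ranges over the finite nonempty subsets of `D`. -/
def FPIn {S : Type*} [Semigroup S] (x : ℕ → S) (D : Set ℕ) : Set S :=
  {s | ∃ a : Finset ℕ, a.Nonempty ∧ ↑a ⊆ D ∧ s = finsetMul x a}

/-- `FPfin x` is the set of products `∏_{i ∈ a} x i` (in increasing order of indices), where
`a` ranges over all finite nonempty subsets of `ℕ`. -/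
def FPfin {S : Type*} [Semigroup S] (x : ℕ → S) : Set S :=
  FPIn x Set.univ

/-- An ultrafilter `p` on a semigroup `S` is *strongly productive* if every member of `p`
contains a set of the form `FP x` that itself belongs to `p`. -/
def StronglyProductive {S : Type*} [Semigroup S] (p : Ultrafilter S) : Prop :=
  ∀ A ∈ p, ∃ x : ℕ → S, FPfin x ⊆ A ∧ FPfin x ∈ p

/-- A sequence in `𝔽` is *ordered* if `max (b n) < min (b (n+1))` for all `n`. -/
def OrderedSeq (b : ℕ → FinsetNat) : Prop :=
  ∀ n : ℕ, (b n : Finset ℕ).max' (b n).2 < (b (n + 1) : Finset ℕ).min' (b (n + 1)).2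

/-- `FU b` is the set of unions `⋃_{i ∈ a} b i` with `a` a finite nonempty subset of `ℕ`. -/
def FU (b : ℕ → FinsetNat) : Set FinsetNat :=
  {c | ∃ a : Finset ℕ, a.Nonempty ∧ (c : Finset ℕ) = a.biUnion fun i => (b i : Finset ℕ)}

/-- An ultrafilter `q` on `𝔽` is an *ordered union ultrafilter* if every member of `q` contains
a set of the form `FU b`, with `b` ordered, that itself belongs to `q`. -/
def OrderedUnionUltrafilter (q : Ultrafilter FinsetNat) : Prop :=
  ∀ A ∈ q, ∃ b : ℕ → FinsetNat, OrderedSeq b ∧ FU b ⊆ A ∧ FU b ∈ q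

/-- A strongly productive ultrafilter `p` on `S` is *multiplicatively isomorphic to an ordered
union ultrafilter* if there is a sequence `x` in `S` such that `a ↦ ∏_{i ∈ a} x i` is injective
and `{f⁻¹[A] : A ∈ p}` is an ordered union ultrafilter on `𝔽`. -/
def MultIsoOrderedUnion {S : Type*} [Semigroup S] (p : Ultrafilter S) : Prop :=
  ∃ x : ℕ → S, Function.Injective (fun a : FinsetNat => finsetMul x (a : Finset ℕ)) ∧
    ∃ q : Ultrafilter FinsetNat, OrderedUnionUltrafilter q ∧
      ∀ B : Set FinsetNat,
        B ∈ q ↔ ∃ A ∈ p, B = (fun a : FinsetNat => finsetMul x (a : Finset ℕ)) ⁻¹' A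

/-- A strongly productive ultrafilter `p` on `S` is *sparse* if for every `A ∈ p` there are a
sequence `x` in `S` and an infinite set `D ⊆ ℕ` with infinite complement such that
`FP x ⊆ A` and the set of finite products of the subsequence of `x` indexed by `D` is in `p`. -/
def SparseSP {S : Type*} [Semigroup S] (p : Ultrafilter S) : Prop :=
  ∀ A ∈ p, ∃ (x : ℕ → S) (D : Set ℕ), D.Infinite ∧ D.compl.Infinite ∧
    FPfin x ⊆ A ∧ FPIn x D ∈ p

/-- A sequence `x` in `S` satisfies the *ordered uniqueness of finite products* if
`a ↦ ∏_{i ∈ a} x i` is injective on `𝔽` and whenever the product of the values at `a` and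
`b` again lies in `FP x`, then `max a < min b`. -/
def OrderedUniqueness {S : Type*} [Semigroup S] (x : ℕ → S) : Prop :=
  Function.Injective (fun a : FinsetNat => finsetMul x (a : Finset ℕ)) ∧
    ∀ a b : FinsetNat,
      finsetMul x (a : Finset ℕ) * finsetMul x (b : Finset ℕ) ∈ FPfin x →
        (a : Finset ℕ).max' a.2 < (b : Finset ℕ).min' b.2


section SparseAux

open Finset

variable {S : Type*} [Semigroup S]

private lemma listMul_append (a : S) (l : List S) (b : S) (m : List S) :
    listMul a (l ++ b :: m) = listMul a l * listMul b m := by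
  induction l generalizing a with
  | nil => rfl
  | cons c l ih =>
    show a * listMul c (l ++ b :: m) = a * listMul c l * listMul b m
    rw [ih, mul_assoc]

/-- auxiliary list product -/
private def listP (x : ℕ → S) : List ℕ → S
  | [] => x 0
  | i :: l => listMul (x i) (l.map x)

private lemma finsetMul_eq_listP (x : ℕ → S) (a : Finset ℕ) :
    finsetMul x a = listP x (a.sort (· ≤ ·)) := by
  unfold finsetMul listP
  cases a.sort (· ≤ ·) with
  | nil => rfl
  | cons i l => rfl

private lemma finsetMul_singleton (x : ℕ → S) (i : ℕ) : finsetMul x {i} = x i := by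
  rw [finsetMul_eq_listP, Finset.sort_singleton]
  rfl

private lemma listP_append (x : ℕ → S) {l₁ l₂ : List ℕ} (h₁ : l₁ ≠ []) (h₂ : l₂ ≠ []) :
    listP x (l₁ ++ l₂) = listP x l₁ * listP x l₂ := by
  match l₁, l₂ with
  | i :: l, j :: m =>
    show listP x (i :: (l ++ j :: m)) = _
    simp only [listP, List.map_append, List.map_cons, listMul_append]

private lemma sort_union (a b : Finset ℕ) (h : ∀ u ∈ a, ∀ v ∈ b, u < v) :
    (a ∪ b).sort (· ≤ ·) = a.sort (· ≤ ·) ++ b.sort (· ≤ ·) := by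
  refine (fun hp h1 h2 => List.Perm.eq_of_pairwise' (r := (· ≤ ·)) h1 h2 hp) ?_ ?_ ?_
  · apply List.perm_of_nodup_nodup_toFinset_eq (Finset.sort_nodup _ _)
    · refine List.Nodup.append (Finset.sort_nodup _ _) (Finset.sort_nodup _ _) ?_
      intro u hu hv
      rw [Finset.mem_sort] at hu hv
      exact absurd (h u hu u hv) (lt_irrefl u)
    · simp [List.toFinset_append, Finset.sort_toFinset]
  · exact Finset.pairwise_sort _ _
  · rw [List.pairwise_append]
    refine ⟨Finset.pairwise_sort _ _, Finset.pairwise_sort _ _, ?_⟩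
    intro u hu v hv
    rw [Finset.mem_sort] at hu hv
    exact (h u hu v hv).le

private lemma sort_ne_nil {a : Finset ℕ} (ha : a.Nonempty) : a.sort (· ≤ ·) ≠ [] := by
  intro heq
  obtain ⟨u, hu⟩ := ha
  have := (Finset.mem_sort (α := ℕ) (· ≤ ·)).mpr hu
  rw [heq] at this
  exact List.not_mem_nil this

private lemma finsetMul_union (x : ℕ → S) {a b : Finset ℕ} (ha : a.Nonempty) (hb : b.Nonempty)
    (h : ∀ u ∈ a, ∀ v ∈ b, u < v) :
    finsetMul x (a ∪ b) = finsetMul x a * finsetMul x b := by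
  rw [finsetMul_eq_listP, finsetMul_eq_listP, finsetMul_eq_listP, sort_union a b h,
    listP_append x (sort_ne_nil ha) (sort_ne_nil hb)]

private lemma mem_FPfin {x : ℕ → S} {a : Finset ℕ} (ha : a.Nonempty) :
    finsetMul x a ∈ FPfin x :=
  ⟨a, ha, Set.subset_univ _, rfl⟩

private lemma self_mem_FPfin (x : ℕ → S) (n : ℕ) : x n ∈ FPfin x :=
  ⟨{n}, Finset.singleton_nonempty n, Set.subset_univ _, (finsetMul_singleton x n).symm⟩

private lemma biUnion_ne {a : Finset ℕ} {b : ℕ → Finset ℕ} (ha : a.Nonempty)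
    (hb : ∀ n, (b n).Nonempty) : (a.biUnion b).Nonempty := by
  obtain ⟨i, hi⟩ := ha
  obtain ⟨e, he⟩ := hb i
  exact ⟨e, Finset.mem_biUnion.mpr ⟨i, hi, he⟩⟩

private lemma pointwise_of_biUnion {b : ℕ → Finset ℕ} (hb : ∀ n, (b n).Nonempty)
    (hord : ∀ n m, n < m → ∀ u ∈ b n, ∀ v ∈ b m, u < v)
    {a d : Finset ℕ}
    (h : ∀ u ∈ a.biUnion b, ∀ v ∈ d.biUnion b, u < v) :
    ∀ i ∈ a, ∀ j ∈ d, i < j := by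
  intro i hi j hj
  obtain ⟨e, he⟩ := hb i
  have heU : e ∈ a.biUnion b := Finset.mem_biUnion.mpr ⟨i, hi, he⟩
  rcases lt_trichotomy i j with h' | rfl | h'
  · exact h'
  · exact absurd (h e heU e (Finset.mem_biUnion.mpr ⟨i, hj, he⟩)) (lt_irrefl e)
  · obtain ⟨f, hf⟩ := hb j
    have h1 : f < e := hord j i h' f hf e he
    have h2 : e < f := h e heU f (Finset.mem_biUnion.mpr ⟨j, hj, hf⟩)
    exact absurd h1 (asymm h2)

private lemma biUnion_subset_of_eq {b : ℕ → Finset ℕ} (hb : ∀ n, (b n).Nonempty)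
    (hord : ∀ n m, n < m → ∀ u ∈ b n, ∀ v ∈ b m, u < v)
    {a d : Finset ℕ} (h : a.biUnion b = d.biUnion b) : a ⊆ d := by
  intro i hi
  obtain ⟨e, he⟩ := hb i
  have : e ∈ d.biUnion b := h ▸ Finset.mem_biUnion.mpr ⟨i, hi, he⟩
  obtain ⟨j, hj, hej⟩ := Finset.mem_biUnion.mp this
  rcases lt_trichotomy i j with h' | rfl | h'
  · exact absurd (hord i j h' e he e hej) (lt_irrefl e)
  · exact hj
  · exact absurd (hord j i h' e hej e he) (lt_irrefl e)

private lemma finsetMul_biUnion (x y : ℕ → S) {b : ℕ → Finset ℕ} (hb : ∀ n, (b n).Nonempty)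
    (hord : ∀ n m, n < m → ∀ u ∈ b n, ∀ v ∈ b m, u < v)
    (hy : ∀ n, y n = finsetMul x (b n)) :
    ∀ a : Finset ℕ, a.Nonempty → finsetMul y a = finsetMul x (a.biUnion b) := by
  intro a
  induction a using Finset.strongInduction with
  | _ a ih =>
    intro ha
    set i := a.max' ha with hidef
    by_cases h' : (a.erase i).Nonempty
    · have hsub : a.erase i ⊂ a := Finset.erase_ssubset (a.max'_mem ha)
      have hlt : ∀ u ∈ a.erase i, u < i := fun u hu =>
        lt_of_le_of_ne (a.le_max' u (Finset.mem_of_mem_erase hu)) (Finset.ne_of_mem_erase hu)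
      have ha2 : a = a.erase i ∪ {i} := by
        rw [Finset.union_comm, ← Finset.insert_eq, Finset.insert_erase (a.max'_mem ha)]
      have hcross : ∀ u ∈ (a.erase i).biUnion b, ∀ v ∈ b i, u < v := by
        intro u hu v hv
        obtain ⟨j, hj, hu'⟩ := Finset.mem_biUnion.mp hu
        exact hord j i (hlt j hj) u hu' v hv
      rw [ha2, finsetMul_union y h' (Finset.singleton_nonempty i)
          (fun u hu v hv => (Finset.mem_singleton.mp hv) ▸ hlt u hu),
        ih _ hsub h', finsetMul_singleton, hy i,
        ← finsetMul_union x (biUnion_ne h' hb) (hb i) hcross]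
      congr 1
      rw [Finset.union_comm (a.erase i) ({i} : Finset ℕ), ← Finset.insert_eq,
        Finset.biUnion_insert, Finset.union_comm]
    · rw [Finset.not_nonempty_iff_eq_empty] at h'
      rcases (Finset.erase_eq_empty_iff a i).mp h' with h2 | h2
      · exact absurd h2 (Finset.nonempty_iff_ne_empty.mp ha)
      · rw [h2, finsetMul_singleton, hy i, Finset.singleton_biUnion]

private lemma extract (x y z : ℕ → S)
    (hy : ∀ a b : Finset ℕ, a.Nonempty → b.Nonempty →
      finsetMul y a * finsetMul y b ∈ FPfin x → ∀ u ∈ a, ∀ v ∈ b, u < v)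
    (hz : ∀ n, ∃ c : Finset ℕ, c.Nonempty ∧ z n = finsetMul y c)
    (hzx : FPfin z ⊆ FPfin x) :
    ∃ c : ℕ → Finset ℕ, (∀ n, (c n).Nonempty) ∧ (∀ n, z n = finsetMul y (c n)) ∧
      ∀ n m, n < m → ∀ u ∈ c n, ∀ v ∈ c m, u < v := by
  choose c h1 h2 using hz
  refine ⟨c, h1, h2, fun n m hnm => ?_⟩
  apply hy _ _ (h1 n) (h1 m)
  rw [← h2 n, ← h2 m]
  have hpt : ∀ u ∈ ({n} : Finset ℕ), ∀ v ∈ ({m} : Finset ℕ), u < v := by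
    intro u hu v hv
    rw [Finset.mem_singleton] at hu hv
    subst hu; subst hv; exact hnm
  have hu : z n * z m = finsetMul z ({n} ∪ {m}) := by
    rw [finsetMul_union z (Finset.singleton_nonempty n) (Finset.singleton_nonempty m) hpt,
      finsetMul_singleton, finsetMul_singleton]
  rw [hu]
  exact hzx (mem_FPfin ⟨n, Finset.mem_union_left _ (Finset.mem_singleton_self n)⟩)

/-- set of products whose index set has an internal gap -/
private def GapSet (y : ℕ → S) : Set S :=
  {s | ∃ a : Finset ℕ, a.Nonempty ∧ s = finsetMul y a ∧
    ∃ j, j ∉ a ∧ (∃ u ∈ a, u < j) ∧ ∃ v ∈ a, j < v}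

private lemma mem_GapSet {y : ℕ → S} {s : S} :
    s ∈ GapSet y ↔ ∃ a : Finset ℕ, a.Nonempty ∧ s = finsetMul y a ∧
      ∃ j, j ∉ a ∧ (∃ u ∈ a, u < j) ∧ ∃ v ∈ a, j < v := Iff.rfl

end SparseAux

/-- If a strongly productive ultrafilter `p` on a semigroup contains `FP x` for some sequence
`x` satisfying the ordered uniqueness of finite products, then `p` is sparse. -/
theorem sparse_of_orderedUniqueness {S : Type*} [Semigroup S] (p : Ultrafilter S)
    (hsp : StronglyProductive p) (x : ℕ → S) (hx : OrderedUniqueness x)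
    (hmem : FPfin x ∈ p) :
    SparseSP p := by
  intro A hA
  obtain ⟨y, hyA, hyp⟩ := hsp (A ∩ FPfin x) (Filter.inter_mem hA hmem)
  have hyx : FPfin y ⊆ FPfin x := fun s hs => (hyA hs).2
  have hyA' : FPfin y ⊆ A := fun s hs => (hyA hs).1
  have hx2 : ∀ a b : Finset ℕ, a.Nonempty → b.Nonempty →
      finsetMul x a * finsetMul x b ∈ FPfin x → ∀ u ∈ a, ∀ v ∈ b, u < v := by
    intro a b ha hb h u hu v hv
    exact lt_of_le_of_lt (Finset.le_max' a u hu)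
      (lt_of_lt_of_le (hx.2 ⟨a, ha⟩ ⟨b, hb⟩ h) (Finset.min'_le b v hv))
  obtain ⟨b, hb, hyb, hbord⟩ := extract x x y hx2
    (fun n => by
      obtain ⟨a, ha, -, heq⟩ := hyx (self_mem_FPfin y n)
      exact ⟨a, ha, heq⟩)
    hyx
  have hfyU : ∀ a : Finset ℕ, a.Nonempty → finsetMul y a = finsetMul x (a.biUnion b) :=
    finsetMul_biUnion x y hb hbord hyb
  have hOy : ∀ a d : Finset ℕ, a.Nonempty → d.Nonempty →
      finsetMul y a * finsetMul y d ∈ FPfin x → ∀ u ∈ a, ∀ v ∈ d, u < v := by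
    intro a d ha hd h
    rw [hfyU a ha, hfyU d hd] at h
    exact pointwise_of_biUnion hb hbord
      (hx2 _ _ (biUnion_ne ha hb) (biUnion_ne hd hb) h)
  have hyinj : ∀ a d : Finset ℕ, a.Nonempty → d.Nonempty →
      finsetMul y a = finsetMul y d → a = d := by
    intro a d ha hd h
    rw [hfyU a ha, hfyU d hd] at h
    have h2 : (⟨a.biUnion b, biUnion_ne ha hb⟩ : FinsetNat) =
        ⟨d.biUnion b, biUnion_ne hd hb⟩ := hx.1 h
    have h3 : a.biUnion b = d.biUnion b := congrArg Subtype.val h2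
    exact Finset.Subset.antisymm (biUnion_subset_of_eq hb hbord h3)
      (biUnion_subset_of_eq hb hbord h3.symm)
  have hGy : GapSet y ⊆ FPfin y := by
    rintro s ⟨a, ha, heq, -⟩
    exact ⟨a, ha, Set.subset_univ _, heq⟩
  have hGp : GapSet y ∈ p := by
    by_contra hGn
    have hGc : (GapSet y)ᶜ ∈ p := Ultrafilter.compl_mem_iff_notMem.mpr hGn
    obtain ⟨z, hzsub, hzp⟩ := hsp ((GapSet y)ᶜ ∩ FPfin y) (Filter.inter_mem hGc hyp)
    have hz1 : FPfin z ⊆ FPfin y := fun s hs => (hzsub hs).2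
    obtain ⟨c, hc, hzc, hcord⟩ := extract x y z hOy
      (fun n => by
        obtain ⟨a, ha, -, heq⟩ := hz1 (self_mem_FPfin z n)
        exact ⟨a, ha, heq⟩)
      (fun s hs => hyx (hz1 hs))
    have h02 : ∀ u ∈ c 0, ∀ v ∈ c 2, u < v := hcord 0 2 (by omega)
    have hkey : finsetMul z ({0} ∪ {2}) = finsetMul y (c 0 ∪ c 2) := by
      rw [finsetMul_union z (Finset.singleton_nonempty 0) (Finset.singleton_nonempty 2)
          (by intro u hu v hv; rw [Finset.mem_singleton] at hu hv; omega),
        finsetMul_singleton, finsetMul_singleton, hzc 0, hzc 2,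
        ← finsetMul_union y (hc 0) (hc 2) h02]
    have hmem02 : finsetMul z ({0} ∪ {2} : Finset ℕ) ∈ FPfin z :=
      mem_FPfin ⟨0, Finset.mem_union_left _ (Finset.mem_singleton_self 0)⟩
    apply (hzsub hmem02).1
    rw [mem_GapSet]
    obtain ⟨e, he⟩ := hc 1
    refine ⟨c 0 ∪ c 2, (hc 0).mono Finset.subset_union_left, hkey, e, ?_, ?_, ?_⟩
    · intro hmem
      rcases Finset.mem_union.mp hmem with h | h
      · exact absurd (hcord 0 1 (by omega) e h e he) (lt_irrefl e)
      · exact absurd (hcord 1 2 (by omega) e he e h) (lt_irrefl e)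
    · obtain ⟨u, hu⟩ := hc 0
      exact ⟨u, Finset.mem_union_left _ hu, hcord 0 1 (by omega) u hu e he⟩
    · obtain ⟨v, hv⟩ := hc 2
      exact ⟨v, Finset.mem_union_right _ hv, hcord 1 2 (by omega) e he v hv⟩
  obtain ⟨z, hzG, hzp⟩ := hsp (GapSet y) hGp
  have hzy : FPfin z ⊆ FPfin y := fun s hs => hGy (hzG hs)
  obtain ⟨c, hc, hzc, hcord⟩ := extract x y z hOy
    (fun n => by
      obtain ⟨a, ha, -, heq⟩ := hzy (self_mem_FPfin z n)
      exact ⟨a, ha, heq⟩)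
    (fun s hs => hyx (hzy hs))
  have hgap : ∀ n, ∃ j, j ∉ c n ∧ (∃ u ∈ c n, u < j) ∧ ∃ v ∈ c n, j < v := by
    intro n
    obtain ⟨a, ha, heq, hgapa⟩ := mem_GapSet.mp (hzG (self_mem_FPfin z n))
    have hac : a = c n := hyinj a (c n) ha (hc n) (heq.symm.trans (hzc n))
    rw [← hac]
    exact hgapa
  choose g hg using hgap
  refine ⟨y, {m | ∃ n, m ∈ c n}, ?_, ?_, hyA', ?_⟩
  · exact Set.infinite_of_injective_forall_mem
      (f := fun n => (c n).min' (hc n))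
      (strictMono_nat_of_lt_succ (fun n =>
        hcord n (n + 1) (Nat.lt_succ_self n) _ ((c n).min'_mem (hc n)) _
          ((c (n + 1)).min'_mem (hc (n + 1))))).injective
      (fun n => ⟨n, (c n).min'_mem (hc n)⟩)
  · apply Set.infinite_of_injective_forall_mem (f := g)
    · apply StrictMono.injective
      apply strictMono_nat_of_lt_succ
      intro n
      obtain ⟨v, hv, h1⟩ := (hg n).2.2
      obtain ⟨u, hu, h2⟩ := (hg (n + 1)).2.1
      exact lt_trans (lt_trans h1 (hcord n (n + 1) (Nat.lt_succ_self n) v hv u hu)) h2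
    · intro n
      show ¬ ∃ m, g n ∈ c m
      rintro ⟨m, hm⟩
      rcases lt_trichotomy m n with h' | heq | h'
      · obtain ⟨u, hu, h2⟩ := (hg n).2.1
        exact absurd (hcord m n h' _ hm u hu) (by omega)
      · exact (hg n).1 (heq ▸ hm)
      · obtain ⟨v, hv, h1⟩ := (hg n).2.2
        exact absurd (hcord n m h' v hv _ hm) (by omega)
  · refine Filter.mem_of_superset hzp ?_
    rintro s ⟨a, ha, -, rfl⟩
    refine ⟨a.biUnion c, biUnion_ne ha hc, ?_, ?_⟩
    · intro u hu
      obtain ⟨i, hi, hui⟩ := Finset.mem_biUnion.mp (Finset.mem_coe.mp hu)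
      exact ⟨i, hui⟩
    · exact finsetMul_biUnion y z hc hcord hzc a ha
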